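/- arXiv:2107.05266 — 7 statements merged into one kernel-verified Lean document; each statement's English description precedes it below -/
import Mathlib

section
/- Every multiplicative linear automorphism Φ of J_n (n ≥ 2) fixes the scalar part: writing Φ(a, u) = (a', u'), one has a' = a. Equivalently, Φ(a, u) - Φ(0, u) = (a, 0) and Φ maps pure elements to pure elements. -/
/-- The spin factor Jordan algebra product on `ℝ × ℝ^d` (here `J_n` with `d = n - 1`). -/
noncomputable def Jmul (d : ℕ) (x y : ℝ × EuclideanSpace ℝ (Fin d)) :
    ℝ × EuclideanSpace ℝ (Fin d) :=
  (x.1 * y.1 + (inner ℝ x.2 y.2 : ℝ), x.1 • y.2 + y.1 • x.2)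

/-- An algebra automorphism of `J_n`: a linear bijection preserving the product. -/
def IsJAut (d : ℕ) (Φ : ℝ × EuclideanSpace ℝ (Fin d) → ℝ × EuclideanSpace ℝ (Fin d)) : Prop :=
  Function.Bijective Φ ∧ IsLinearMap ℝ Φ ∧ ∀ x y, Φ (Jmul d x y) = Jmul d (Φ x) (Φ y)

theorem stmt_5 (d : ℕ) (hd : 1 ≤ d)
    (Φ : ℝ × EuclideanSpace ℝ (Fin d) → ℝ × EuclideanSpace ℝ (Fin d))
    (hΦ : IsJAut d Φ) :
    (∀ (a : ℝ) (u : EuclideanSpace ℝ (Fin d)), (Φ (a, u)).1 = a) ∧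
    (∀ (a : ℝ) (u : EuclideanSpace ℝ (Fin d)), Φ (a, u) - Φ (0, u) = (a, 0)) ∧
    (∀ u : EuclideanSpace ℝ (Fin d), (Φ (0, u)).1 = 0) := by
  obtain ⟨hbij, hlin, hmul⟩ := hΦ
  set e : ℝ × EuclideanSpace ℝ (Fin d) := (1, 0) with he
  have hLunit : ∀ x, Jmul d e x = x := by
    intro x; simp [Jmul, he]
  have hRunit : ∀ x, Jmul d x e = x := by
    intro x; simp [Jmul, he]
  have hΦeL : ∀ y, Jmul d (Φ e) y = y := by
    intro y
    obtain ⟨x, rfl⟩ := hbij.2 y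
    rw [← hmul, hLunit]
  have hΦe : Φ e = e := by
    have := hΦeL e
    rwa [hRunit (Φ e)] at this
  -- scalar elements are fixed
  have hscal : ∀ c : ℝ, Φ (c, 0) = (c, 0) := by
    intro c
    have h1 : ((c : ℝ), (0 : EuclideanSpace ℝ (Fin d))) = c • e := by
      simp [he, Prod.smul_def]
    rw [h1, hlin.map_smul, hΦe, ← h1]
  -- pure elements map to pure elements
  have hpure : ∀ u : EuclideanSpace ℝ (Fin d), (Φ (0, u)).1 = 0 := by
    intro u
    set b : ℝ := (Φ (0, u)).1 with hb
    set v : EuclideanSpace ℝ (Fin d) := (Φ (0, u)).2 with hv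
    have hΦu : Φ (0, u) = (b, v) := rfl
    have hsq : Φ (Jmul d (0, u) (0, u)) = Jmul d (b, v) (b, v) := by
      rw [hmul, hΦu]
    have hJ : Jmul d ((0 : ℝ), u) (0, u) = ((inner ℝ u u : ℝ), 0) := by
      simp [Jmul]
    rw [hJ, hscal] at hsq
    have h2 : (0 : EuclideanSpace ℝ (Fin d)) = b • v + b • v := congrArg Prod.snd hsq
    by_contra hb0
    have hv0 : v = 0 := by
      have : (b + b) • v = 0 := by
        rw [add_smul]; exact h2.symm
      rcases smul_eq_zero.mp this with h | h
      · exact absurd (by linarith [h] : b = 0) hb0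
      · exact h
    have : Φ (0, u) = Φ (b, 0) := by rw [hΦu, hv0, hscal]
    have heq := hbij.1 this
    have : (0 : ℝ) = b := congrArg Prod.fst heq
    exact hb0 this.symm
  refine ⟨?_, ?_, hpure⟩
  · intro a u
    have hsplit : ((a : ℝ), u) = (a, (0 : EuclideanSpace ℝ (Fin d))) + (0, u) := by
      simp
    rw [hsplit, hlin.map_add, hscal]
    have := hpure u
    simp [Prod.fst_add, this]
  · intro a u
    have hsplit : ((a : ℝ), u) = (a, (0 : EuclideanSpace ℝ (Fin d))) + (0, u) := by
      simp
    rw [hsplit, hlin.map_add, hscal]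
    abel
end

section
/- If a pure element (0, u) of J_n is in the same orbit as (b, v) under the automorphism group of J_n (i.e., Φ(0,u) = (b,v) for some automorphism Φ) and b ≠ 0, then v = 0; consequently a nonzero pure element cannot be equivalent under automorphisms to a non-pure element. -/
lemma Jmul_one_left (d : ℕ) (y : ℝ × EuclideanSpace ℝ (Fin d)) :
    Jmul d (1, 0) y = y := by
  simp [Jmul]

lemma Jmul_one_right (d : ℕ) (y : ℝ × EuclideanSpace ℝ (Fin d)) :
    Jmul d y (1, 0) = y := by
  simp [Jmul]

lemma JAut_fixes_one (d : ℕ) (Φ : ℝ × EuclideanSpace ℝ (Fin d) → ℝ × EuclideanSpace ℝ (Fin d))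
    (hΦ : IsJAut d Φ) : Φ (1, 0) = (1, 0) := by
  obtain ⟨hbij, hlin, hmul⟩ := hΦ
  have hid : ∀ y, Jmul d (Φ (1, 0)) y = y := by
    intro y
    obtain ⟨x, rfl⟩ := hbij.2 y
    rw [← hmul, Jmul_one_left]
  have := hid (1, 0)
  rwa [show Jmul d (Φ (1,0)) (1,0) = Φ (1,0) from Jmul_one_right d _] at this

theorem stmt_6 (d : ℕ) (hd : 1 ≤ d)
    (Φ : ℝ × EuclideanSpace ℝ (Fin d) → ℝ × EuclideanSpace ℝ (Fin d))
    (hΦ : IsJAut d Φ) (u : EuclideanSpace ℝ (Fin d)) (b : ℝ)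
    (v : EuclideanSpace ℝ (Fin d)) (h : Φ (0, u) = (b, v)) :
    (b ≠ 0 → v = 0) ∧ (u ≠ 0 → b = 0) := by
  obtain ⟨hbij, hlin, hmul⟩ := hΦ
  have hone : Φ (1, 0) = (1, 0) := JAut_fixes_one d Φ ⟨hbij, hlin, hmul⟩
  have hsmul : ∀ c : ℝ, Φ (c, 0) = (c, 0) := by
    intro c
    have : (c, (0 : EuclideanSpace ℝ (Fin d))) = c • ((1 : ℝ), (0 : EuclideanSpace ℝ (Fin d))) := by
      simp [Prod.smul_def]
    rw [this, hlin.map_smul, hone]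
  have hsq := hmul (0, u) (0, u)
  rw [h] at hsq
  have hlhs : Jmul d (0, u) (0, u) = ((inner ℝ u u : ℝ), 0) := by
    simp [Jmul]
  rw [hlhs, hsmul] at hsq
  have hrhs : Jmul d (b, v) (b, v) = (b * b + (inner ℝ v v : ℝ), b • v + b • v) := rfl
  rw [hrhs] at hsq
  have h2 : (0 : EuclideanSpace ℝ (Fin d)) = b • v + b • v := congrArg Prod.snd hsq
  have hbv : b ≠ 0 → v = 0 := by
    intro hb
    have : (2 * b) • v = 0 := by
      rw [two_mul, add_smul]; exact h2.symm
    rcases smul_eq_zero.mp this with h' | h'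
    · exact absurd (by linarith) hb
    · exact h'
  refine ⟨hbv, ?_⟩
  intro hu
  by_contra hb
  have hv := hbv hb
  rw [hv] at h
  have : Φ (0, u) = Φ (b, 0) := by rw [h, hsmul]
  have heq := hbij.1 this
  have : u = 0 := by
    have := congrArg Prod.snd heq
    simpa using this
  exact hu this
end

section
/- For n ≥ 2, two elements (a, u) and (b, v) of J_n lie in the same orbit under the automorphism group of J_n if and only if a = b and ‖u‖ = ‖v‖. -/
theorem stmt_8 (d : ℕ) (hd : 1 ≤ d) (a b : ℝ) (u v : EuclideanSpace ℝ (Fin d)) :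
    (∃ Φ : ℝ × EuclideanSpace ℝ (Fin d) → ℝ × EuclideanSpace ℝ (Fin d),
      IsJAut d Φ ∧ Φ (a, u) = (b, v)) ↔ (a = b ∧ ‖u‖ = ‖v‖) := by
  constructor
  · rintro ⟨Φ, ⟨hbij, hlin, hmul⟩, hΦ⟩
    -- (1,0) is a two-sided unit
    have he : ∀ x, Jmul d (1, 0) x = x := by
      intro x; simp [Jmul]
    have he' : ∀ x, Jmul d x (1, 0) = x := by
      intro x; simp [Jmul]
    have hunit : ∀ y, Jmul d (Φ (1, 0)) y = y := by
      intro y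
      obtain ⟨x, rfl⟩ := hbij.2 y
      rw [← hmul, he]
    have hΦe : Φ (1, 0) = (1, 0) :=
      (he' (Φ (1, 0))).symm.trans (hunit (1, 0))
    set c : ℝ := (Φ ((0 : ℝ), u)).1 with hc
    set w : EuclideanSpace ℝ (Fin d) := (Φ ((0 : ℝ), u)).2 with hw
    -- decomposition
    have hdecomp : Φ (a, u) = (a + c, w) := by
      have h1 : (a, u) = a • ((1 : ℝ), (0 : EuclideanSpace ℝ (Fin d))) + (0, u) := by
        simp [Prod.ext_iff]
      rw [h1, hlin.map_add, hlin.map_smul, hΦe]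
      simp [Prod.ext_iff, hc, hw]
    have hb : b = a + c := by rw [hΦ] at hdecomp; exact (congrArg Prod.fst hdecomp)
    have hv : v = w := by rw [hΦ] at hdecomp; exact (congrArg Prod.snd hdecomp)
    -- square relation
    have hsq : Φ (Jmul d ((0 : ℝ), u) (0, u)) = ((‖u‖ ^ 2 : ℝ), (0 : EuclideanSpace ℝ (Fin d))) := by
      have h2 : Jmul d ((0 : ℝ), u) (0, u)
          = (‖u‖ ^ 2 : ℝ) • ((1 : ℝ), (0 : EuclideanSpace ℝ (Fin d))) := by
        simp only [Jmul]
        rw [real_inner_self_eq_norm_sq]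
        simp [Prod.ext_iff]
      rw [h2, hlin.map_smul, hΦe]
      simp [Prod.ext_iff]
    have hsq' : Jmul d (Φ ((0 : ℝ), u)) (Φ ((0 : ℝ), u))
        = ((‖u‖ ^ 2 : ℝ), (0 : EuclideanSpace ℝ (Fin d))) := by
      rw [← hmul]; exact hsq
    have hfst : c * c + ‖w‖ ^ 2 = ‖u‖ ^ 2 := by
      have h3 := congrArg Prod.fst hsq'
      simp only [Jmul] at h3
      rw [real_inner_self_eq_norm_sq] at h3
      exact h3
    have hsnd : c • w + c • w = 0 := by
      have h3 := congrArg Prod.snd hsq'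
      simp only [Jmul] at h3
      exact h3
    have hc0 : c = 0 := by
      by_contra hcne
      have hw0 : w = 0 := by
        have h2 : (2 * c) • w = 0 := by
          rw [two_mul, add_smul]; exact hsnd
        rcases smul_eq_zero.mp h2 with h | h
        · exact absurd (by linarith [h] : c = 0) hcne
        · exact h
      have : Φ ((0 : ℝ), u) = Φ (c • ((1 : ℝ), (0 : EuclideanSpace ℝ (Fin d)))) := by
        rw [hlin.map_smul, hΦe]
        have : Φ ((0 : ℝ), u) = (c, w) := Prod.ext hc.symm hw.symm
        rw [this, hw0]
        simp [Prod.ext_iff]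
      have heq := hbij.1 this
      have : (0 : ℝ) = c := by
        have := congrArg Prod.fst heq
        simpa using this
      exact hcne this.symm
    have hwu : ‖w‖ = ‖u‖ := by
      rw [hc0] at hfst
      nlinarith [norm_nonneg u, norm_nonneg w]
    constructor
    · rw [hb, hc0, add_zero]
    · rw [hv, hwu]
  · rintro ⟨rfl, hn⟩
    by_cases huv : u = v
    · exact ⟨id, ⟨Function.bijective_id, ⟨fun _ _ => rfl, fun _ _ => rfl⟩, fun _ _ => rfl⟩,
        by rw [huv]; rfl⟩
    · set R := Submodule.reflection (ℝ ∙ (u - v))ᗮ with hR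
      refine ⟨fun x => (x.1, R x.2), ⟨?_, ⟨?_, ?_⟩, ?_⟩, ?_⟩
      · exact Function.bijective_id.prodMap R.bijective
      · intro x y; simp [Prod.ext_iff, map_add]
      · intro s x; simp [Prod.ext_iff, map_smul]
      · intro x y
        simp only [Jmul, map_add, map_smul, Prod.mk.injEq]
        exact ⟨by rw [LinearIsometryEquiv.inner_map_map], trivial⟩
      · simp only [Prod.mk.injEq]
        exact ⟨trivial, Submodule.reflection_sub hn⟩
end

section
/- For any two pure elements u, v of J_n with ‖u‖ = ‖v‖, there exists an automorphism Φ of J_n with Φ(0, u) = (0, v). -/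
theorem stmt_9 (d : ℕ) (u v : EuclideanSpace ℝ (Fin d)) (h : ‖u‖ = ‖v‖) :
    ∃ Φ : ℝ × EuclideanSpace ℝ (Fin d) → ℝ × EuclideanSpace ℝ (Fin d),
      IsJAut d Φ ∧ Φ (0, u) = (0, v) := by
  set f := Submodule.reflection (ℝ ∙ (u - v))ᗮ with hf
  refine ⟨fun x => (x.1, f x.2), ⟨⟨?_, ?_⟩, ⟨?_, ?_⟩, ?_⟩, ?_⟩
  · intro a b hab
    simp only [Prod.mk.injEq] at hab
    exact Prod.ext hab.1 (f.injective hab.2)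
  · intro y
    exact ⟨(y.1, f.symm y.2), by simp⟩
  · intro a b; simp [map_add]
  · intro c a; simp [map_smul]
  · intro x y
    simp only [Jmul]
    refine Prod.ext ?_ ?_
    · simp [f.inner_map_map]
    · simp [map_add, map_smul]
  · simp [hf, Submodule.reflection_sub h]
end

section
/- For n ≥ 3, the image of the associator p(x, y, z) = (x ∘ y) ∘ z - x ∘ (y ∘ z) evaluated on J_n is exactly the set V of pure elements {(0, v) : v ∈ ℝ^{n-1}}. -/
/-- The associator in `J_n`. -/
noncomputable def Jassoc (d : ℕ) (x y z : ℝ × EuclideanSpace ℝ (Fin d)) :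
    ℝ × EuclideanSpace ℝ (Fin d) :=
  Jmul d (Jmul d x y) z - Jmul d x (Jmul d y z)

lemma Jassoc_fst (d : ℕ) (x y z : ℝ × EuclideanSpace ℝ (Fin d)) : (Jassoc d x y z).1 = 0 := by
  simp only [Jassoc, Jmul, Prod.fst_sub, inner_add_left, inner_add_right,
    real_inner_smul_left, real_inner_smul_right, real_inner_comm x.2 y.2]
  ring

lemma Jassoc_snd (d : ℕ) (x y z : ℝ × EuclideanSpace ℝ (Fin d)) :
    (Jassoc d x y z).2 = (inner ℝ x.2 y.2 : ℝ) • z.2 - (inner ℝ y.2 z.2 : ℝ) • x.2 := by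
  simp only [Jassoc, Jmul, Prod.snd_sub, smul_add, smul_smul]
  module

lemma aux_ortho (d : ℕ) (hd : 2 ≤ d) (v : EuclideanSpace ℝ (Fin d)) :
    ∃ w : EuclideanSpace ℝ (Fin d), w ≠ 0 ∧ (inner ℝ w v : ℝ) = 0 := by
  have h1 : Module.finrank ℝ (ℝ ∙ v) ≤ 1 := by
    rcases eq_or_ne v 0 with h | h
    · rw [h, Submodule.span_zero_singleton]; simp
    · simp [finrank_span_singleton h]
  have h2 := Submodule.finrank_add_finrank_orthogonal (K := (ℝ ∙ v))
  rw [finrank_euclideanSpace_fin] at h2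
  have hpos : 0 < Module.finrank ℝ (ℝ ∙ v)ᗮ := by omega
  rw [Module.finrank_pos_iff] at hpos
  obtain ⟨⟨w, hw⟩, hw0⟩ := exists_ne (0 : (ℝ ∙ v)ᗮ)
  exact ⟨w, by simpa [Subtype.ext_iff] using hw0,
    Submodule.mem_orthogonal_singleton_iff_inner_left.1 hw⟩

theorem stmt_13 (d : ℕ) (hd : 2 ≤ d) :
    {p : ℝ × EuclideanSpace ℝ (Fin d) | ∃ x y z, Jassoc d x y z = p} =
      {p : ℝ × EuclideanSpace ℝ (Fin d) | p.1 = 0} := by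
  ext p
  simp only [Set.mem_setOf_eq]
  constructor
  · rintro ⟨x, y, z, rfl⟩
    exact Jassoc_fst d x y z
  · intro hp
    obtain ⟨w, hw0, hwv⟩ := aux_ortho d hd p.2
    refine ⟨(0, w), (0, w), (0, (‖w‖ ^ 2)⁻¹ • p.2), ?_⟩
    have hne : (‖w‖ : ℝ) ^ 2 ≠ 0 := pow_ne_zero 2 (norm_ne_zero_iff.2 hw0)
    ext1
    · rw [Jassoc_fst]; exact hp.symm
    · rw [Jassoc_snd]
      rw [real_inner_smul_right, hwv, mul_zero, zero_smul, sub_zero,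
        real_inner_self_eq_norm_sq, smul_smul, mul_inv_cancel₀ hne, one_smul]
end

section
/- For n ≥ 3, the image of the polynomial q(x₁,y₁,z₁,x₂,y₂,z₂) = p(x₁,y₁,z₁) ∘ p(x₂,y₂,z₂), where p is the associator, evaluated on J_n is exactly the set of scalar elements {(r, 0) : r ∈ ℝ}. -/
lemma Jassoc_pure (d : ℕ) (u v w : EuclideanSpace ℝ (Fin d)) :
    Jassoc d (0, u) (0, v) (0, w) = (0, (inner ℝ u v : ℝ) • w - (inner ℝ v w : ℝ) • u) := by
  simp [Jassoc, Jmul, Prod.ext_iff]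

theorem stmt_14 (d : ℕ) (hd : 2 ≤ d) :
    {p : ℝ × EuclideanSpace ℝ (Fin d) |
        ∃ x₁ y₁ z₁ x₂ y₂ z₂, Jmul d (Jassoc d x₁ y₁ z₁) (Jassoc d x₂ y₂ z₂) = p} =
      {p : ℝ × EuclideanSpace ℝ (Fin d) | p.2 = 0} := by
  ext p
  simp only [Set.mem_setOf_eq]
  constructor
  · rintro ⟨x₁, y₁, z₁, x₂, y₂, z₂, rfl⟩
    simp [Jmul, Jassoc_fst]
  · intro hp
    set i0 : Fin d := ⟨0, by omega⟩
    set i1 : Fin d := ⟨1, by omega⟩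
    have hne : i0 ≠ i1 := by simp [i0, i1, Fin.ext_iff]
    refine ⟨(0, EuclideanSpace.single i0 1), (0, EuclideanSpace.single i0 1),
      (0, EuclideanSpace.single i1 1), (0, EuclideanSpace.single i0 p.1),
      (0, EuclideanSpace.single i0 1), (0, EuclideanSpace.single i1 1), ?_⟩
    rw [Jassoc_pure, Jassoc_pure]
    simp [Jmul, EuclideanSpace.inner_single_left, EuclideanSpace.single_apply, hne,
      hne.symm, Prod.ext_iff, hp]
end

section
/- For n ≥ 2, the polynomial f(x₁,y₁,z₁,x₂,y₂,z₂,y₃,z₃) = p(p(x₁,y₁,z₁) ∘ p(x₂,y₂,z₂), y₃, z₃), where p denotes the associator, is identically zero on J_n. -/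
lemma Jassoc_scalar (d : ℕ) (s : ℝ) (y z : ℝ × EuclideanSpace ℝ (Fin d)) :
    Jassoc d (s, 0) y z = 0 := by
  apply Prod.ext
  · simp [Jassoc, Jmul, inner_add_left, inner_add_right, inner_smul_left,
      inner_smul_right]
    ring
  · simp [Jassoc, Jmul, smul_smul, smul_add]
    module

theorem stmt_15 (d : ℕ) (hd : 1 ≤ d)
    (x₁ y₁ z₁ x₂ y₂ z₂ y₃ z₃ : ℝ × EuclideanSpace ℝ (Fin d)) :
    Jassoc d (Jmul d (Jassoc d x₁ y₁ z₁) (Jassoc d x₂ y₂ z₂)) y₃ z₃ = 0 := by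
  set a := Jassoc d x₁ y₁ z₁ with ha
  set b := Jassoc d x₂ y₂ z₂ with hb
  have h : Jmul d a b = ((inner ℝ a.2 b.2 : ℝ), 0) := by
    simp [Jmul, Jassoc_fst d x₁ y₁ z₁, Jassoc_fst d x₂ y₂ z₂, ha, hb]
  rw [h, Jassoc_scalar]
end
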